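/- Let n ≥ 2 and let 1 ≤ r ≤ n−1. Then Σ_{σ ∈ S_n} (fix(σ) − 1)^{r+1} = n! · Σ_{s=1}^{r} (−1)^{r−s} C(r,s) · ( Σ_{i=1}^{s} i · S(s,i) ), where C(r,s) is the binomial coefficient. Representation-theoretically, this says the multiplicity of the standard irreducible representation S^{(n−1,1)} of S_n in the r-th tensor power of itself equals Σ_{s=1}^{r} (−1)^{r−s} C(r,s) Σ_{i=1}^{s} i S(s,i). -/
import Mathlib


/-- Stirling numbers of the second kind. -/
def stirling : ℕ → ℕ → ℕ
  | 0, 0 => 1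
  | 0, _ + 1 => 0
  | _ + 1, 0 => 0
  | n + 1, k + 1 => (k + 1) * stirling n (k + 1) + stirling n k

/-- The number of fixed points of a permutation of `Fin n`. -/
def fixCount {n : ℕ} (σ : Equiv.Perm (Fin n)) : ℕ :=
  (Finset.univ.filter fun x => σ x = x).card

open Finset

lemma stirling_eq_zero_of_lt : ∀ {s i : ℕ}, s < i → stirling s i = 0
  | 0, i + 1, _ => rfl
  | s + 1, i + 1, h => by
    have h1 : s < i + 1 := by omega
    have h2 : s < i := by omega
    simp [stirling, stirling_eq_zero_of_lt h1, stirling_eq_zero_of_lt h2]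

lemma mul_descFactorial (x i : ℕ) :
    x * x.descFactorial i = x.descFactorial (i + 1) + i * x.descFactorial i := by
  rcases le_or_gt i x with h | h
  · rw [Nat.descFactorial_succ]
    nth_rewrite 1 [← Nat.sub_add_cancel h]
    rw [Nat.add_mul]
  · rw [Nat.descFactorial_of_lt h, Nat.descFactorial_of_lt (by omega)]
    simp

lemma pow_eq_sum_stirling (x k : ℕ) :
    x ^ k = ∑ i ∈ range (k + 1), stirling k i * x.descFactorial i := by
  induction k with
  | zero => simp [stirling]
  | succ k ih =>
    have key : ∑ i ∈ range (k + 1), i * stirling k i * x.descFactorial i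
        = ∑ i ∈ range (k + 1), (i + 1) * stirling k (i + 1) * x.descFactorial (i + 1) := by
      have h1 : ∑ i ∈ range (k + 2), i * stirling k i * x.descFactorial i
          = ∑ i ∈ range (k + 1), (i + 1) * stirling k (i + 1) * x.descFactorial (i + 1) := by
        rw [Finset.sum_range_succ' (fun i => i * stirling k i * x.descFactorial i)]
        simp
      rw [← h1, Finset.sum_range_succ (fun i => i * stirling k i * x.descFactorial i) (k + 1),
        stirling_eq_zero_of_lt (Nat.lt_succ_self k)]
      simp
    calc x ^ (k + 1) = (∑ i ∈ range (k + 1), stirling k i * x.descFactorial i) * x := by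
          rw [pow_succ, ih]
      _ = ∑ i ∈ range (k + 1), (stirling k i * x.descFactorial (i + 1)
            + i * stirling k i * x.descFactorial i) := by
          rw [Finset.sum_mul]
          refine Finset.sum_congr rfl fun i _ => ?_
          rw [mul_assoc, mul_comm (Nat.descFactorial x i) x, mul_descFactorial]
          ring
      _ = ∑ i ∈ range (k + 1), stirling k i * x.descFactorial (i + 1)
            + ∑ i ∈ range (k + 1), (i + 1) * stirling k (i + 1) * x.descFactorial (i + 1) := by
          rw [Finset.sum_add_distrib, key]
      _ = ∑ i ∈ range (k + 1), stirling (k + 1) (i + 1) * x.descFactorial (i + 1) := by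
          rw [← Finset.sum_add_distrib]
          refine Finset.sum_congr rfl fun i _ => ?_
          show _ = ((i + 1) * stirling k (i + 1) + stirling k i) * _
          ring
      _ = ∑ i ∈ range (k + 2), stirling (k + 1) i * x.descFactorial i := by
          rw [Finset.sum_range_succ' (fun i => stirling (k + 1) i * x.descFactorial i)]
          simp [stirling]

lemma card_fixing (n : ℕ) (s : Finset (Fin n)) :
    (Finset.univ.filter fun σ : Equiv.Perm (Fin n) => ∀ x ∈ s, σ x = x).card
      = (n - s.card).factorial := by
  rw [← Fintype.card_subtype]
  have e1 : Equiv.Perm {x : Fin n // x ∉ s}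
      ≃ {σ : Equiv.Perm (Fin n) // ∀ x ∈ s, σ x = x} :=
    (Equiv.Perm.subtypeEquivSubtypePerm (fun x : Fin n => x ∉ s)).trans
      (Equiv.subtypeEquivRight (fun σ => by
        constructor
        · intro h x hx
          exact h x (by simpa using hx)
        · intro h a ha
          exact h a (by simpa using ha)))
  rw [← Fintype.card_congr e1, Fintype.card_perm]
  congr 1
  rw [Fintype.card_subtype]
  simp only [Finset.filter_not, Finset.filter_mem_eq_inter, Finset.univ_inter]
  rw [Finset.card_sdiff_of_subset (Finset.subset_univ s), Finset.card_univ, Fintype.card_fin]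

lemma descFactorial_fixCount_eq_card {n i : ℕ} (σ : Equiv.Perm (Fin n)) :
    (fixCount σ).descFactorial i
      = (Finset.univ.filter fun f : Fin i ↪ Fin n => ∀ j, σ (f j) = f j).card := by
  rw [← Fintype.card_subtype]
  have e : {f : Fin i ↪ Fin n // ∀ j, σ (f j) = f j}
      ≃ (Fin i ↪ {x : Fin n // σ x = x}) :=
    (Equiv.subtypeEquivRight (fun f => by
      simp only [Set.mem_setOf_eq])).trans (Equiv.codRestrict (Fin i) {x : Fin n | σ x = x})
  rw [Fintype.card_congr e, Fintype.card_embedding_eq, Fintype.card_fin]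
  congr 1
  rw [Fintype.card_subtype]
  rfl

lemma sum_descFactorial_fixCount (n i : ℕ) (hi : i ≤ n) :
    ∑ σ : Equiv.Perm (Fin n), (fixCount σ).descFactorial i = n.factorial := by
  have step1 : ∀ σ : Equiv.Perm (Fin n), (fixCount σ).descFactorial i
      = ∑ f : Fin i ↪ Fin n, if (∀ j, σ (f j) = f j) then 1 else 0 := by
    intro σ
    rw [descFactorial_fixCount_eq_card, Finset.card_filter]
  simp_rw [step1]
  rw [Finset.sum_comm]
  have step2 : ∀ f : Fin i ↪ Fin n,
      (∑ σ : Equiv.Perm (Fin n), if (∀ j, σ (f j) = f j) then 1 else 0) = (n - i).factorial := by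
    intro f
    rw [← Finset.card_filter]
    have : (Finset.univ.filter fun σ : Equiv.Perm (Fin n) => ∀ j, σ (f j) = f j)
        = Finset.univ.filter fun σ : Equiv.Perm (Fin n) =>
            ∀ x ∈ Finset.univ.image f, σ x = x := by
      apply Finset.filter_congr
      intro σ _
      simp only [Finset.mem_image, Finset.mem_univ, true_and]
      constructor
      · rintro h x ⟨j, rfl⟩; exact h j
      · intro h j; exact h (f j) ⟨j, rfl⟩
    rw [this, card_fixing]
    congr 1
    rw [Finset.card_image_of_injective _ f.injective, Finset.card_univ, Fintype.card_fin]
  simp_rw [step2]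
  rw [Finset.sum_const, Finset.card_univ, Fintype.card_embedding_eq, Fintype.card_fin,
    Fintype.card_fin, smul_eq_mul, mul_comm, Nat.factorial_mul_descFactorial hi]

def bell (s : ℕ) : ℕ := ∑ i ∈ Finset.range (s + 1), stirling s i

lemma sum_pow_fixCount (n k : ℕ) (h : k ≤ n) :
    ∑ σ : Equiv.Perm (Fin n), (fixCount σ : ℤ) ^ k = (n.factorial : ℤ) * (bell k : ℤ) := by
  have key : ∑ σ : Equiv.Perm (Fin n), (fixCount σ) ^ k = n.factorial * bell k := by
    simp_rw [pow_eq_sum_stirling]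
    rw [Finset.sum_comm]
    have : ∀ i ∈ range (k + 1),
        ∑ σ : Equiv.Perm (Fin n), stirling k i * (fixCount σ).descFactorial i
          = stirling k i * n.factorial := by
      intro i hi
      have hik : i ≤ k := Nat.lt_succ_iff.mp (Finset.mem_range.mp hi)
      rw [← Finset.mul_sum, sum_descFactorial_fixCount n i (le_trans hik h)]
    rw [Finset.sum_congr rfl this, ← Finset.sum_mul, bell, mul_comm]
  calc ∑ σ : Equiv.Perm (Fin n), (fixCount σ : ℤ) ^ k
      = ((∑ σ : Equiv.Perm (Fin n), (fixCount σ) ^ k : ℕ) : ℤ) := by push_cast; rfl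
    _ = _ := by rw [key]; push_cast; ring

lemma bell_succ_sub (s : ℕ) :
    (bell (s + 1) : ℤ) - (bell s : ℤ)
      = ∑ i ∈ Finset.Icc 1 s, (i : ℤ) * (stirling s i : ℤ) := by
  have h1 : bell (s + 1) = (∑ i ∈ range (s + 1), (i + 1) * stirling s (i + 1)) + bell s := by
    rw [bell, Finset.sum_range_succ' (fun i => stirling (s + 1) i)]
    have : ∀ i, stirling (s + 1) (i + 1) = (i + 1) * stirling s (i + 1) + stirling s i := fun i => rfl
    simp_rw [this]
    rw [Finset.sum_add_distrib]
    show _ + _ + stirling (s + 1) 0 = _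
    have h0 : stirling (s + 1) 0 = 0 := rfl
    rw [h0, add_zero, bell]
  have h2 : ∑ i ∈ range (s + 1), (i + 1) * stirling s (i + 1)
      = ∑ i ∈ Finset.Icc 1 s, i * stirling s i := by
    have h3 : ∑ i ∈ range (s + 2), i * stirling s i
        = ∑ i ∈ range (s + 1), (i + 1) * stirling s (i + 1) := by
      rw [Finset.sum_range_succ' (fun i => i * stirling s i)]
      simp
    rw [← h3, Finset.sum_range_succ (fun i => i * stirling s i) (s + 1),
      stirling_eq_zero_of_lt (Nat.lt_succ_self s), Nat.mul_zero, add_zero]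
    symm
    apply Finset.sum_subset
    · intro x hx
      simp only [Finset.mem_Icc] at hx
      simp only [Finset.mem_range]
      omega
    · intro x hx1 hx
      simp only [Finset.mem_range] at hx1
      simp only [Finset.mem_Icc] at hx
      have : x = 0 := by omega
      simp [this]
  rw [h1, h2]
  push_cast
  ring

lemma key_identity (B : ℕ → ℤ) (r : ℕ) :
    ∑ m ∈ range (r + 2), (-1 : ℤ) ^ (m + (r + 1)) * ((r + 1).choose m : ℤ) * B m
      = ∑ s ∈ range (r + 1), (-1 : ℤ) ^ (r + s) * (r.choose s : ℤ) * (B (s + 1) - B s) := by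
  have neg2 : ∀ a : ℕ, (-1 : ℤ) ^ (a + 2) = (-1) ^ a := fun a => by
    rw [pow_add]; norm_num
  have hA : ∑ s ∈ range (r + 1), (-1 : ℤ) ^ (r + s + 1) * (r.choose s : ℤ) * B s
      = ∑ m ∈ range r, (-1 : ℤ) ^ (r + m) * (r.choose (m + 1) : ℤ) * B (m + 1)
        + (-1 : ℤ) ^ (r + 1) * B 0 := by
    rw [Finset.sum_range_succ' (fun s => (-1 : ℤ) ^ (r + s + 1) * (r.choose s : ℤ) * B s)]
    congr 1
    · refine Finset.sum_congr rfl fun m _ => ?_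
      have h : r + (m + 1) + 1 = (r + m) + 2 := by ring
      rw [h, neg2]
    · simp
  have hB : ∑ m ∈ range (r + 1), (-1 : ℤ) ^ (r + m) * (r.choose (m + 1) : ℤ) * B (m + 1)
      = ∑ m ∈ range r, (-1 : ℤ) ^ (r + m) * (r.choose (m + 1) : ℤ) * B (m + 1) := by
    rw [Finset.sum_range_succ, Nat.choose_succ_self]
    simp
  calc ∑ m ∈ range (r + 2), (-1 : ℤ) ^ (m + (r + 1)) * ((r + 1).choose m : ℤ) * B m
      = ∑ m ∈ range (r + 1),
          (-1 : ℤ) ^ (m + 1 + (r + 1)) * ((r + 1).choose (m + 1) : ℤ) * B (m + 1)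
        + (-1 : ℤ) ^ (0 + (r + 1)) * ((r + 1).choose 0 : ℤ) * B 0 :=
        Finset.sum_range_succ' _ _
    _ = ∑ m ∈ range (r + 1), ((-1 : ℤ) ^ (r + m) * (r.choose m : ℤ) * B (m + 1)
          + (-1 : ℤ) ^ (r + m) * (r.choose (m + 1) : ℤ) * B (m + 1))
        + (-1 : ℤ) ^ (r + 1) * B 0 := by
        congr 1
        · refine Finset.sum_congr rfl fun m _ => ?_
          have h : m + 1 + (r + 1) = (r + m) + 2 := by ring
          rw [h, neg2, Nat.choose_succ_succ]
          push_cast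
          ring
        · simp
    _ = ∑ m ∈ range (r + 1), (-1 : ℤ) ^ (r + m) * (r.choose m : ℤ) * B (m + 1)
        + (∑ m ∈ range r, (-1 : ℤ) ^ (r + m) * (r.choose (m + 1) : ℤ) * B (m + 1)
          + (-1 : ℤ) ^ (r + 1) * B 0) := by
        rw [Finset.sum_add_distrib, hB]
        ring
    _ = ∑ m ∈ range (r + 1), (-1 : ℤ) ^ (r + m) * (r.choose m : ℤ) * B (m + 1)
        + ∑ s ∈ range (r + 1), (-1 : ℤ) ^ (r + s + 1) * (r.choose s : ℤ) * B s := by rw [hA]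
    _ = ∑ s ∈ range (r + 1), (-1 : ℤ) ^ (r + s) * (r.choose s : ℤ) * (B (s + 1) - B s) := by
        rw [← Finset.sum_add_distrib]
        refine Finset.sum_congr rfl fun s _ => ?_
        rw [pow_succ]
        ring

theorem multiplicity_standard_in_standard_tensor_power (n r : ℕ) (hn : 2 ≤ n)
    (hr1 : 1 ≤ r) (hrn : r ≤ n - 1) :
    ∑ σ : Equiv.Perm (Fin n), ((fixCount σ : ℤ) - 1) ^ (r + 1) =
      (Nat.factorial n : ℤ) *
        ∑ s ∈ Finset.Icc 1 r, (-1 : ℤ) ^ (r - s) * (Nat.choose r s : ℤ) *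
          ∑ i ∈ Finset.Icc 1 s, (i : ℤ) * (stirling s i : ℤ) := by
  have hr1n : r + 1 ≤ n := by omega
  -- LHS
  have lhs_eq : ∑ σ : Equiv.Perm (Fin n), ((fixCount σ : ℤ) - 1) ^ (r + 1)
      = (n.factorial : ℤ) * ∑ m ∈ range (r + 2),
          (-1 : ℤ) ^ (m + (r + 1)) * ((r + 1).choose m : ℤ) * (bell m : ℤ) := by
    have expand : ∀ σ : Equiv.Perm (Fin n), ((fixCount σ : ℤ) - 1) ^ (r + 1)
        = ∑ m ∈ range (r + 2),
            (-1 : ℤ) ^ (m + (r + 1)) * ((r + 1).choose m : ℤ) * (fixCount σ : ℤ) ^ m := by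
      intro σ
      rw [sub_pow]
      refine Finset.sum_congr rfl fun m _ => ?_
      rw [one_pow]
      ring
    simp_rw [expand]
    rw [Finset.sum_comm, Finset.mul_sum]
    refine Finset.sum_congr rfl fun m hm => ?_
    have hmn : m ≤ n := by
      have := Finset.mem_range.mp hm; omega
    rw [← Finset.mul_sum, sum_pow_fixCount n m hmn]
    ring
  -- RHS inner sums
  have rhs_eq : ∑ s ∈ Finset.Icc 1 r, (-1 : ℤ) ^ (r - s) * (Nat.choose r s : ℤ) *
          ∑ i ∈ Finset.Icc 1 s, (i : ℤ) * (stirling s i : ℤ)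
      = ∑ s ∈ range (r + 1), (-1 : ℤ) ^ (r + s) * (r.choose s : ℤ)
          * ((bell (s + 1) : ℤ) - (bell s : ℤ)) := by
    have step : ∀ s ∈ Finset.Icc 1 r, (-1 : ℤ) ^ (r - s) * (Nat.choose r s : ℤ) *
          (∑ i ∈ Finset.Icc 1 s, (i : ℤ) * (stirling s i : ℤ))
        = (-1 : ℤ) ^ (r + s) * (r.choose s : ℤ)
          * ((bell (s + 1) : ℤ) - (bell s : ℤ)) := by
      intro s hs
      have hsr : s ≤ r := (Finset.mem_Icc.mp hs).2
      have hpow : (-1 : ℤ) ^ (r - s) = (-1 : ℤ) ^ (r + s) := by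
        rw [show r + s = (r - s) + 2 * s by omega, pow_add, pow_mul]
        norm_num
      rw [hpow, bell_succ_sub]
    rw [Finset.sum_congr rfl step]
    apply Finset.sum_subset
    · intro x hx
      simp only [Finset.mem_Icc] at hx
      simp only [Finset.mem_range]
      omega
    · intro x hx1 hx
      simp only [Finset.mem_range] at hx1
      simp only [Finset.mem_Icc] at hx
      have hx0 : x = 0 := by omega
      subst hx0
      have hb : (bell 1 : ℤ) - (bell 0 : ℤ) = 0 := by
        have h1 : bell 1 = 1 := by decide
        have h0 : bell 0 = 1 := by decide
        rw [h1, h0]; ring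
      rw [hb]
      ring
  rw [lhs_eq, rhs_eq, key_identity (fun s => (bell s : ℤ)) r]
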